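/- Let X and Y be 4×4 complex matrices, and write the characteristic polynomial of a 4×4 matrix M as det(t·I₄ − M) = t⁴ − c₁(M)t³ + c₂(M)t² − c₃(M)t + c₄(M). Then for all s, t ∈ ℂ: det(sX + tY) = det(X)·s⁴ + c₃₁·s³t + c₂₂·s²t² + c₁₃·st³ + det(Y)·t⁴, where c₃₁ = c₃(X)tr(Y) − c₂(X)tr(XY) + tr(X²Y)tr(X) − tr(X³Y), c₂₂ = c₂(X)c₂(Y) + c₂(XY) − tr(X²Y²) + tr(X²Y)tr(Y) + tr(XY²)tr(X) − tr(XY)tr(X)tr(Y), and c₁₃ = c₃(Y)tr(X) − c₂(Y)tr(XY) + tr(XY²)tr(Y) − tr(XY³). -/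
import Mathlib
open Matrix Polynomial

noncomputable def e2 (M : Matrix (Fin 4) (Fin 4) ℂ) : ℂ :=
  (M 0 0 * M 1 1 - M 0 1 * M 1 0) + (M 0 0 * M 2 2 - M 0 2 * M 2 0) + (M 0 0 * M 3 3 - M 0 3 * M 3 0) + (M 1 1 * M 2 2 - M 1 2 * M 2 1) + (M 1 1 * M 3 3 - M 1 3 * M 3 1) + (M 2 2 * M 3 3 - M 2 3 * M 3 2)

noncomputable def e3 (M : Matrix (Fin 4) (Fin 4) ℂ) : ℂ :=
  (M 0 0 * (M 1 1 * M 2 2 - M 1 2 * M 2 1) - M 0 1 * (M 1 0 * M 2 2 - M 1 2 * M 2 0) + M 0 2 * (M 1 0 * M 2 1 - M 1 1 * M 2 0)) + (M 0 0 * (M 1 1 * M 3 3 - M 1 3 * M 3 1) - M 0 1 * (M 1 0 * M 3 3 - M 1 3 * M 3 0) + M 0 3 * (M 1 0 * M 3 1 - M 1 1 * M 3 0)) + (M 0 0 * (M 2 2 * M 3 3 - M 2 3 * M 3 2) - M 0 2 * (M 2 0 * M 3 3 - M 2 3 * M 3 0) + M 0 3 * (M 2 0 * M 3 2 - M 2 2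 * M 3 0)) + (M 1 1 * (M 2 2 * M 3 3 - M 2 3 * M 3 2) - M 1 2 * (M 2 1 * M 3 3 - M 2 3 * M 3 1) + M 1 3 * (M 2 1 * M 3 2 - M 2 2 * M 3 1))

set_option maxHeartbeats 2000000 in
theorem charpoly_fin4 (M : Matrix (Fin 4) (Fin 4) ℂ) :
    M.charpoly = X^4 - C M.trace * X^3 + C (e2 M) * X^2 - C (e3 M) * X + C M.det := by
  rw [Matrix.charpoly]
  have h1 : (Fin.succ 2 : Fin 4) = 3 := rfl
  have h2 : (Fin.castSucc 2 : Fin 4) = 2 := rfl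
  have h3 : ((1:Fin 4) < Fin.succ 2) = True := eq_true (by rw [h1]; decide)
  simp [h1, h2, h3, Matrix.det_succ_row_zero, Fin.sum_univ_succ, charmatrix_apply_eq, charmatrix_apply_ne,
    Matrix.trace, Matrix.diag, Fin.sum_univ_four, e2, e3, Fin.succAbove, Matrix.submatrix_apply]
  ring

theorem coeff2_fin4 (M : Matrix (Fin 4) (Fin 4) ℂ) : M.charpoly.coeff 2 = e2 M := by
  rw [charpoly_fin4]; simp

theorem coeff1_fin4 (M : Matrix (Fin 4) (Fin 4) ℂ) : M.charpoly.coeff 1 = - e3 M := by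
  rw [charpoly_fin4]; simp

set_option maxHeartbeats 4000000 in
theorem det_fin_four' (M : Matrix (Fin 4) (Fin 4) ℂ) :
    M.det =
      M 0 0*M 1 1*M 2 2*M 3 3 - M 0 0*M 1 1*M 2 3*M 3 2 - M 0 0*M 1 2*M 2 1*M 3 3 + M 0 0*M 1 2*M 2 3*M 3 1 + M 0 0*M 1 3*M 2 1*M 3 2 - M 0 0*M 1 3*M 2 2*M 3 1 - M 0 1*M 1 0*M 2 2*M 3 3 + M 0 1*M 1 0*M 2 3*M 3 2 + M 0 1*M 1 2*M 2 0*M 3 3 - M 0 1*M 1 2*M 2 3*M 3 0 - M 0 1*M 1 3*M 2 0*M 3 2 + M 0 1*M 1 3*M 2 2*M 3 0 + M 0 2*M 1 0*M 2 1*M 3 3 - M 0 2*M 1 0*M 2 3*M 3 1 - M 0 2*M 1 1*M 2 0*M 3 3 + M 0 2*M 1 1*M 2 3*M 3 0 + M 0 2*M 1 3*M 2 0*M 3 1 - M 0 2*M 1 3*M 2 1*M 3 0 - M 0 3*M 1 0*M 2 1*M 3 2 + M 0 3*M 1 0*M 2 2*M 3 1 + M 0 3*M 1 1*M 2 0*M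 3 2 - M 0 3*M 1 1*M 2 2*M 3 0 - M 0 3*M 1 2*M 2 0*M 3 1 + M 0 3*M 1 2*M 2 1*M 3 0 := by
  have h1 : (Fin.succ 2 : Fin 4) = 3 := rfl
  have h2 : (Fin.castSucc 2 : Fin 4) = 2 := rfl
  have h3 : ((1:Fin 4) < Fin.succ 2) = True := eq_true (by rw [h1]; decide)
  have h4 : Fin.succAbove (1:Fin 4) 2 = 3 := rfl
  have h5 : Fin.succAbove (2:Fin 4) 2 = 3 := rfl
  have h6 : Fin.succAbove (3:Fin 4) 2 = 2 := rfl
  simp [Matrix.det_succ_row_zero, Fin.sum_univ_succ, h1, h2, h3, h4, h5, h6, Matrix.submatrix_apply]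
  ring

theorem trace_fin_four' (M : Matrix (Fin 4) (Fin 4) ℂ) :
    M.trace = M 0 0 + M 1 1 + M 2 2 + M 3 3 := by
  simp [Matrix.trace, Matrix.diag, Fin.sum_univ_four]

set_option maxHeartbeats 4000000 in
theorem det_pencil_expansion (X Y : Matrix (Fin 4) (Fin 4) ℂ) :
    ∀ s t : ℂ,
      (s • X + t • Y).det =
        X.det * s^4
        + ((-X.charpoly.coeff 1) * Y.trace - X.charpoly.coeff 2 * (X * Y).trace
            + (X^2 * Y).trace * X.trace - (X^3 * Y).trace) * s^3 * t
        + (X.charpoly.coeff 2 * Y.charpoly.coeff 2 + (X * Y).charpoly.coeff 2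
            - (X^2 * Y^2).trace + (X^2 * Y).trace * Y.trace
            + (X * Y^2).trace * X.trace - (X * Y).trace * X.trace * Y.trace) * s^2 * t^2
        + ((-Y.charpoly.coeff 1) * X.trace - Y.charpoly.coeff 2 * (X * Y).trace
            + (X * Y^2).trace * Y.trace - (X * Y^3).trace) * s * t^3
        + Y.det * t^4 := by
  intro s t
  simp only [coeff2_fin4, coeff1_fin4, e2, e3, det_fin_four', trace_fin_four',
    pow_succ, pow_zero, one_mul, Matrix.mul_apply, Fin.sum_univ_four,
    Matrix.add_apply, Matrix.smul_apply, smul_eq_mul]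
  ring
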